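/- Upcasts shrink terms under erasure: in λ_{[]⟨⟩}^{≤full} with the explicit upcast reduction rules, if M ▷ A reduces in one step (under compatible closure of the upcast rules) to N, then ⌊M⌋ ⊑ ⌊N⌋, where ⌊-⌋ is type erasure and ⊑ is the record-width preorder on untyped terms. -/

import Mathlib

namespace Stmt13

abbrev Label := ℕ

/-- Types of λ_{[]⟨⟩}^{≤full}. -/
inductive Ty : Type where
  | tvar : ℕ → Ty
  | arrow : Ty → Ty → Ty
  | variant : List (Label × Ty) → Ty
  | record : List (Label × Ty) → Ty

/-- Full structural subtyping: covariant in variants, records and codomains,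
contravariant in function domains. -/
inductive Sub : Ty → Ty → Prop where
  | tvar (n : ℕ) : Sub (.tvar n) (.tvar n)
  | arrow {A A' B B'} : Sub A' A → Sub B B' → Sub (.arrow A B) (.arrow A' B')
  | variant {R R'} :
      (∀ ℓ A, List.lookup ℓ R = some A → ∃ A', List.lookup ℓ R' = some A') →
      (∀ ℓ A A', List.lookup ℓ R = some A → List.lookup ℓ R' = some A' → Sub A A') →
      Sub (.variant R) (.variant R')
  | record {R R'} :
      (∀ ℓ A', List.lookup ℓ R' = some A' → ∃ A, List.lookup ℓ R = some A) →
      (∀ ℓ A A', List.lookup ℓ R = some A → List.lookup ℓ R' = some A' → Sub A A') →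
      Sub (.record R) (.record R')

/-- Typed terms; `upcast M A` is the explicit upcast M ▷ A. -/
inductive Tm : Type where
  | var : ℕ → Tm
  | lam : Ty → Tm → Tm
  | app : Tm → Tm → Tm
  | inj : Label → Tm → Ty → Tm
  | case : Tm → List (Label × Tm) → Tm
  | record : List (Label × Tm) → Tm
  | proj : Tm → Label → Tm
  | upcast : Tm → Ty → Tm

mutual
def shiftTm (c : ℕ) : Tm → Tm
  | .var n => if n < c then .var n else .var (n + 1)
  | .lam A M => .lam A (shiftTm (c + 1) M)
  | .app M N => .app (shiftTm c M) (shiftTm c N)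
  | .inj ℓ M A => .inj ℓ (shiftTm c M) A
  | .case M Bs => .case (shiftTm c M) (shiftLs (c + 1) Bs)
  | .record es => .record (shiftLs c es)
  | .proj M ℓ => .proj (shiftTm c M) ℓ
  | .upcast M A => .upcast (shiftTm c M) A
def shiftLs (c : ℕ) : List (Label × Tm) → List (Label × Tm)
  | [] => []
  | (ℓ, M) :: es => (ℓ, shiftTm c M) :: shiftLs c es
end

mutual
/-- Capture-avoiding substitution of N for de Bruijn index k. -/
def substTm (k : ℕ) (N : Tm) : Tm → Tm
  | .var n => if n = k then N else if n < k then .var n else .var (n - 1)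
  | .lam A M => .lam A (substTm (k + 1) (shiftTm 0 N) M)
  | .app M₁ M₂ => .app (substTm k N M₁) (substTm k N M₂)
  | .inj ℓ M A => .inj ℓ (substTm k N M) A
  | .case M Bs => .case (substTm k N M) (substLs (k + 1) (shiftTm 0 N) Bs)
  | .record es => .record (substLs k N es)
  | .proj M ℓ => .proj (substTm k N M) ℓ
  | .upcast M A => .upcast (substTm k N M) A
def substLs (k : ℕ) (N : Tm) : List (Label × Tm) → List (Label × Tm)
  | [] => []
  | (ℓ, M) :: es => (ℓ, substTm k N M) :: substLs k N es
end

mutual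
/-- Replace each occurrence of variable k by (var k ▷ A), keeping binders. -/
def replaceUp (A : Ty) (k : ℕ) : Tm → Tm
  | .var n => if n = k then .upcast (.var n) A else .var n
  | .lam B M => .lam B (replaceUp A (k + 1) M)
  | .app M N => .app (replaceUp A k M) (replaceUp A k N)
  | .inj ℓ M B => .inj ℓ (replaceUp A k M) B
  | .case M Bs => .case (replaceUp A k M) (replaceUpLs A (k + 1) Bs)
  | .record es => .record (replaceUpLs A k es)
  | .proj M ℓ => .proj (replaceUp A k M) ℓ
  | .upcast M B => .upcast (replaceUp A k M) B
def replaceUpLs (A : Ty) (k : ℕ) : List (Label × Tm) → List (Label × Tm)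
  | [] => []
  | (ℓ, M) :: es => (ℓ, replaceUp A k M) :: replaceUpLs A k es
end

/-- Typing of λ_{[]⟨⟩}^{≤full}. -/
inductive HasTy : List Ty → Tm → Ty → Prop where
  | var {Γ n A} : Γ[n]? = some A → HasTy Γ (.var n) A
  | lam {Γ A B M} : HasTy (A :: Γ) M B → HasTy Γ (.lam A M) (.arrow A B)
  | app {Γ A B M N} : HasTy Γ M (.arrow A B) → HasTy Γ N A → HasTy Γ (.app M N) B
  | inj {Γ ℓ R A M} : List.lookup ℓ R = some A → HasTy Γ M A →
      HasTy Γ (.inj ℓ M (.variant R)) (.variant R)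
  | case {Γ R M Bs C} : HasTy Γ M (.variant R) →
      (∀ ℓ A, List.lookup ℓ R = some A → (List.lookup ℓ Bs).isSome) →
      (∀ ℓ A N, List.lookup ℓ R = some A → List.lookup ℓ Bs = some N →
        HasTy (A :: Γ) N C) →
      HasTy Γ (.case M Bs) C
  | record {Γ} {es : List (Label × Tm)} {R : List (Label × Ty)} :
      es.map Prod.fst = R.map Prod.fst →
      (∀ (i : ℕ) p q, es[i]? = some p → R[i]? = some q →
        HasTy Γ (Prod.snd p) (Prod.snd q)) →
      HasTy Γ (.record es) (.record R)
  | proj {Γ R M ℓ A} : HasTy Γ M (.record R) → List.lookup ℓ R = some A →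
      HasTy Γ (.proj M ℓ) A
  | upcast {Γ M A B} : HasTy Γ M A → Sub A B → HasTy Γ (.upcast M B) B

/-! ### Untyped terms, erasure, and the record-width preorder ⊑. -/

/-- Untyped λ_{[]⟨⟩} terms. -/
inductive UTm : Type where
  | var : ℕ → UTm
  | lam : UTm → UTm
  | app : UTm → UTm → UTm
  | inj : Label → UTm → UTm
  | case : UTm → List (Label × UTm) → UTm
  | record : List (Label × UTm) → UTm
  | proj : UTm → Label → UTm

mutual
def shiftU (c : ℕ) : UTm → UTm
  | .var n => if n < c then .var n else .var (n + 1)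
  | .lam M => .lam (shiftU (c + 1) M)
  | .app M N => .app (shiftU c M) (shiftU c N)
  | .inj ℓ M => .inj ℓ (shiftU c M)
  | .case M Bs => .case (shiftU c M) (shiftULs (c + 1) Bs)
  | .record es => .record (shiftULs c es)
  | .proj M ℓ => .proj (shiftU c M) ℓ
def shiftULs (c : ℕ) : List (Label × UTm) → List (Label × UTm)
  | [] => []
  | (ℓ, M) :: es => (ℓ, shiftU c M) :: shiftULs c es
end

mutual
/-- Capture-avoiding substitution on untyped terms. -/
def substU (k : ℕ) (N : UTm) : UTm → UTm
  | .var n => if n = k then N else if n < k then .var n else .var (n - 1)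
  | .lam M => .lam (substU (k + 1) (shiftU 0 N) M)
  | .app M₁ M₂ => .app (substU k N M₁) (substU k N M₂)
  | .inj ℓ M => .inj ℓ (substU k N M)
  | .case M Bs => .case (substU k N M) (substULs (k + 1) (shiftU 0 N) Bs)
  | .record es => .record (substULs k N es)
  | .proj M ℓ => .proj (substU k N M) ℓ
def substULs (k : ℕ) (N : UTm) : List (Label × UTm) → List (Label × UTm)
  | [] => []
  | (ℓ, M) :: es => (ℓ, substU k N M) :: substULs k N es
end

mutual
/-- Type erasure: drop upcasts and all type annotations. -/
def erase : Tm → UTm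
  | .var n => .var n
  | .lam _ M => .lam (erase M)
  | .app M N => .app (erase M) (erase N)
  | .inj ℓ M _ => .inj ℓ (erase M)
  | .case M Bs => .case (erase M) (eraseLs Bs)
  | .record es => .record (eraseLs es)
  | .proj M ℓ => .proj (erase M) ℓ
  | .upcast M _ => erase M
def eraseLs : List (Label × Tm) → List (Label × UTm)
  | [] => []
  | (ℓ, M) :: es => (ℓ, erase M) :: eraseLs es
end

/-- The preorder ⊑ on untyped terms: a record on the left may have extra
fields; congruent on all other constructs. -/
inductive Sqsub : UTm → UTm → Prop where
  | var (n : ℕ) : Sqsub (.var n) (.var n)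
  | lam {M M'} : Sqsub M M' → Sqsub (.lam M) (.lam M')
  | app {M M' N N'} : Sqsub M M' → Sqsub N N' → Sqsub (.app M N) (.app M' N')
  | inj {ℓ M M'} : Sqsub M M' → Sqsub (.inj ℓ M) (.inj ℓ M')
  | case {M M' Bs Bs'} : Sqsub M M' →
      Bs.map Prod.fst = Bs'.map Prod.fst →
      (∀ (i : ℕ) p q, Bs[i]? = some p → Bs'[i]? = some q →
        Sqsub (Prod.snd p) (Prod.snd q)) →
      Sqsub (.case M Bs) (.case M' Bs')
  | proj {M M' ℓ} : Sqsub M M' → Sqsub (.proj M ℓ) (.proj M' ℓ)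
  | record {es es'} :
      (∀ ℓ N, List.lookup ℓ es' = some N → (List.lookup ℓ es).isSome) →
      (∀ ℓ M N, List.lookup ℓ es = some M → List.lookup ℓ es' = some N →
        Sqsub M N) →
      Sqsub (.record es) (.record es')

/-! ### Reduction. -/

/-- β base rules on typed terms. -/
inductive Beta : Tm → Tm → Prop where
  | lam {A M N} : Beta (.app (.lam A M) N) (substTm 0 N M)
  | case {ℓ M A Bs N} : List.lookup ℓ Bs = some N →
      Beta (.case (.inj ℓ M A) Bs) (substTm 0 M N)
  | proj {es ℓ M} : List.lookup ℓ es = some M → Beta (.proj (.record es) ℓ) M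

/-- Upcast base rules: upcasts are pushed through values. -/
inductive Up : Tm → Tm → Prop where
  | tvar {M n} : Up (.upcast M (.tvar n)) M
  | lam {A M A' B'} :
      Up (.upcast (.lam A M) (.arrow A' B'))
         (.lam A' (.upcast (replaceUp A 0 M) B'))
  | inj {ℓ M A R Aℓ} : List.lookup ℓ R = some Aℓ →
      Up (.upcast (.inj ℓ M A) (.variant R))
         (.inj ℓ (.upcast M Aℓ) (.variant R))
  | record {es : List (Label × Tm)} {R : List (Label × Ty)} {Ns : List (Label × Tm)} :
      Ns.map Prod.fst = R.map Prod.fst →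
      (∀ (i : ℕ) q r, R[i]? = some q → Ns[i]? = some r →
        ∃ M, List.lookup (Prod.fst q) es = some M ∧
          Prod.snd r = Tm.upcast M (Prod.snd q)) →
      Up (.upcast (.record es) (.record R)) (.record Ns)

/-- Compatible closure of a base reduction relation on typed terms. -/
inductive Compat (r : Tm → Tm → Prop) : Tm → Tm → Prop where
  | base {M N} : r M N → Compat r M N
  | lam {A M M'} : Compat r M M' → Compat r (.lam A M) (.lam A M')
  | appL {M M' N} : Compat r M M' → Compat r (.app M N) (.app M' N)
  | appR {M N N'} : Compat r N N' → Compat r (.app M N) (.app M N')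
  | inj {ℓ M M' A} : Compat r M M' → Compat r (.inj ℓ M A) (.inj ℓ M' A)
  | caseScrut {M M' Bs} : Compat r M M' → Compat r (.case M Bs) (.case M' Bs)
  | caseBranch {M Bs₁ Bs₂ ℓ N N'} : Compat r N N' →
      Compat r (.case M (Bs₁ ++ (ℓ, N) :: Bs₂)) (.case M (Bs₁ ++ (ℓ, N') :: Bs₂))
  | recordField {es₁ es₂ ℓ M M'} : Compat r M M' →
      Compat r (.record (es₁ ++ (ℓ, M) :: es₂)) (.record (es₁ ++ (ℓ, M') :: es₂))
  | proj {M M' ℓ} : Compat r M M' → Compat r (.proj M ℓ) (.proj M' ℓ)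
  | upcast {M M' A} : Compat r M M' → Compat r (.upcast M A) (.upcast M' A)

/-- β base rules on untyped terms. -/
inductive UBeta : UTm → UTm → Prop where
  | lam {M N} : UBeta (.app (.lam M) N) (substU 0 N M)
  | case {ℓ M Bs N} : List.lookup ℓ Bs = some N →
      UBeta (.case (.inj ℓ M) Bs) (substU 0 M N)
  | proj {es ℓ M} : List.lookup ℓ es = some M → UBeta (.proj (.record es) ℓ) M

/-- Compatible closure on untyped terms. -/
inductive UCompat (r : UTm → UTm → Prop) : UTm → UTm → Prop where
  | base {M N} : r M N → UCompat r M N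
  | lam {M M'} : UCompat r M M' → UCompat r (.lam M) (.lam M')
  | appL {M M' N} : UCompat r M M' → UCompat r (.app M N) (.app M' N)
  | appR {M N N'} : UCompat r N N' → UCompat r (.app M N) (.app M N')
  | inj {ℓ M M'} : UCompat r M M' → UCompat r (.inj ℓ M) (.inj ℓ M')
  | caseScrut {M M' Bs} : UCompat r M M' → UCompat r (.case M Bs) (.case M' Bs)
  | caseBranch {M Bs₁ Bs₂ ℓ N N'} : UCompat r N N' →
      UCompat r (.case M (Bs₁ ++ (ℓ, N) :: Bs₂)) (.case M (Bs₁ ++ (ℓ, N') :: Bs₂))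
  | recordField {es₁ es₂ ℓ M M'} : UCompat r M M' →
      UCompat r (.record (es₁ ++ (ℓ, M) :: es₂)) (.record (es₁ ++ (ℓ, M') :: es₂))
  | proj {M M' ℓ} : UCompat r M M' → UCompat r (.proj M ℓ) (.proj M' ℓ)


-- auxiliary lemmas, to be inserted before the theorem
section Aux

theorem lookup_cons_eq {α : Type} (k : Label) (a : α) (es : List (Label × α)) :
    List.lookup k ((k, a) :: es) = some a := by simp [List.lookup]

theorem lookup_cons_ne {α : Type} {ℓ k : Label} (h : ℓ ≠ k) (a : α) (es : List (Label × α)) :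
    List.lookup ℓ ((k, a) :: es) = List.lookup ℓ es := by
  simp [List.lookup, beq_eq_false_iff_ne.mpr h]

theorem lookup_mem' : ∀ {α : Type} {es : List (Label × α)} {ℓ M},
    List.lookup ℓ es = some M → (ℓ, M) ∈ es
  | _, (k, a) :: es, ℓ, M, h => by
      by_cases hk : ℓ = k
      · subst hk; rw [lookup_cons_eq] at h; cases h; exact List.mem_cons_self
      · rw [lookup_cons_ne hk] at h
        exact List.mem_cons_of_mem _ (lookup_mem' h)

theorem lookup_mem : ∀ {es : List (Label × UTm)} {ℓ M},
    List.lookup ℓ es = some M → (ℓ, M) ∈ es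
  | (k, a) :: es, ℓ, M, h => by
      by_cases hk : ℓ = k
      · subst hk; rw [lookup_cons_eq] at h; cases h; exact List.mem_cons_self
      · rw [lookup_cons_ne hk] at h
        exact List.mem_cons_of_mem _ (lookup_mem h)

mutual
theorem sqsub_refl : ∀ M : UTm, Sqsub M M
  | .var n => .var n
  | .lam M => .lam (sqsub_refl M)
  | .app M N => .app (sqsub_refl M) (sqsub_refl N)
  | .inj ℓ M => .inj (sqsub_refl M)
  | .proj M ℓ => .proj (sqsub_refl M)
  | .case M Bs => .case (sqsub_refl M) rfl (fun i p q hp hq => by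
      rw [hp] at hq; cases hq
      exact sqsub_refl_ls Bs p (List.mem_of_getElem? hp))
  | .record es => .record
      (fun ℓ N h => by rw [h]; rfl)
      (fun ℓ M N hM hN => by
        rw [hM] at hN; cases hN
        exact sqsub_refl_ls es (ℓ, M) (lookup_mem hM))
theorem sqsub_refl_ls : ∀ (es : List (Label × UTm)) p, p ∈ es → Sqsub p.2 p.2
  | (k, M) :: es, p, h => by
      rcases List.mem_cons.mp h with h | h
      · subst h; exact sqsub_refl M
      · exact sqsub_refl_ls es p h
end

mutual
theorem erase_replaceUp (A : Ty) : ∀ (k : ℕ) (M : Tm), erase (replaceUp A k M) = erase M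
  | k, .var n => by
      by_cases h : n = k <;> simp [replaceUp, h, erase]
  | k, .lam B M => by simp [replaceUp, erase, erase_replaceUp A (k+1) M]
  | k, .app M N => by simp [replaceUp, erase, erase_replaceUp A k M, erase_replaceUp A k N]
  | k, .inj ℓ M B => by simp [replaceUp, erase, erase_replaceUp A k M]
  | k, .case M Bs => by
      simp [replaceUp, erase, erase_replaceUp A k M, erase_replaceUpLs A (k+1) Bs]
  | k, .record es => by simp [replaceUp, erase, erase_replaceUpLs A k es]
  | k, .proj M ℓ => by simp [replaceUp, erase, erase_replaceUp A k M]
  | k, .upcast M B => by simp [replaceUp, erase, erase_replaceUp A k M]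
theorem erase_replaceUpLs (A : Ty) : ∀ (k : ℕ) (es : List (Label × Tm)),
    eraseLs (replaceUpLs A k es) = eraseLs es
  | _, [] => rfl
  | k, (ℓ, M) :: es => by
      simp [replaceUpLs, eraseLs, erase_replaceUp A k M, erase_replaceUpLs A k es]
end

theorem erase_upcast (M : Tm) (A : Ty) : erase (.upcast M A) = erase M := rfl
theorem erase_lam' (A : Ty) (M : Tm) : erase (.lam A M) = .lam (erase M) := rfl
theorem erase_record' (es : List (Label × Tm)) :
    erase (.record es) = .record (eraseLs es) := rfl
theorem erase_case' (M : Tm) (Bs : List (Label × Tm)) :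
    erase (.case M Bs) = .case (erase M) (eraseLs Bs) := rfl
theorem eraseLs_cons (ℓ : Label) (M : Tm) (es : List (Label × Tm)) :
    eraseLs ((ℓ, M) :: es) = (ℓ, erase M) :: eraseLs es := rfl

theorem lookup_eraseLs : ∀ (es : List (Label × Tm)) (ℓ : Label),
    List.lookup ℓ (eraseLs es) = Option.map erase (List.lookup ℓ es)
  | [], ℓ => rfl
  | (k, M) :: es, ℓ => by
      by_cases h : ℓ = k
      · subst h; rw [eraseLs, lookup_cons_eq, lookup_cons_eq]; rfl
      · rw [eraseLs, lookup_cons_ne h, lookup_cons_ne h, lookup_eraseLs es ℓ]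

theorem eraseLs_append : ∀ (xs ys : List (Label × Tm)),
    eraseLs (xs ++ ys) = eraseLs xs ++ eraseLs ys
  | [], ys => rfl
  | (ℓ, M) :: xs, ys => by simp [eraseLs, eraseLs_append xs ys]

/-- Keys equal + indexwise Sqsub gives the lookup-based record conditions. -/
theorem record_of_pointwise : ∀ {es es' : List (Label × UTm)},
    es.map Prod.fst = es'.map Prod.fst →
    (∀ (i : ℕ) p q, es[i]? = some p → es'[i]? = some q → Sqsub p.2 q.2) →
    (∀ ℓ N, List.lookup ℓ es' = some N → (List.lookup ℓ es).isSome) ∧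
    (∀ ℓ M N, List.lookup ℓ es = some M → List.lookup ℓ es' = some N → Sqsub M N)
  | [], [], _, _ => ⟨fun ℓ N h => by simp [List.lookup] at h,
                     fun ℓ M N h => by simp [List.lookup] at h⟩
  | (k, a) :: es, (k', b) :: es', hk, hp => by
      simp only [List.map_cons, List.cons.injEq] at hk
      obtain ⟨rfl, hk⟩ := hk
      have IH := record_of_pointwise hk (fun i p q h1 h2 => hp (i+1) p q h1 h2)
      constructor
      · intro ℓ N h
        by_cases hl : ℓ = k
        · subst hl; rw [lookup_cons_eq]; rfl
        · rw [lookup_cons_ne hl] at h ⊢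
          exact IH.1 ℓ N h
      · intro ℓ M N hM hN
        by_cases hl : ℓ = k
        · subst hl; rw [lookup_cons_eq] at hM hN; cases hM; cases hN
          exact hp 0 _ _ rfl rfl
        · rw [lookup_cons_ne hl] at hM hN
          exact IH.2 ℓ M N hM hN
  | [], _ :: _, hk, _ => by simp at hk
  | _ :: _, [], hk, _ => by simp at hk

/-- One changed entry in a list: keys equal and indexwise Sqsub. -/
theorem one_change : ∀ (xs₁ : List (Label × UTm)) (xs₂ : List (Label × UTm))
    (ℓ : Label) (u u' : UTm), Sqsub u u' →
    (xs₁ ++ (ℓ, u) :: xs₂).map Prod.fst = (xs₁ ++ (ℓ, u') :: xs₂).map Prod.fst ∧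
    (∀ (i : ℕ) p q, (xs₁ ++ (ℓ, u) :: xs₂)[i]? = some p →
      (xs₁ ++ (ℓ, u') :: xs₂)[i]? = some q → Sqsub p.2 q.2)
  | [], xs₂, ℓ, u, u', h => by
      refine ⟨by simp, ?_⟩
      intro i p q hp hq
      cases i with
      | zero => simp at hp hq; subst hp; subst hq; exact h
      | succ i =>
          rw [List.nil_append, List.getElem?_cons_succ] at hp hq
          rw [hp] at hq; cases hq; exact sqsub_refl p.2
  | x :: xs₁, xs₂, ℓ, u, u', h => by
      have IH := one_change xs₁ xs₂ ℓ u u' h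
      refine ⟨by simpa using IH.1, ?_⟩
      intro i p q hp hq
      cases i with
      | zero => simp at hp hq; rw [hp] at hq; cases hq; exact sqsub_refl p.2
      | succ i => exact IH.2 i p q (by simpa using hp) (by simpa using hq)

theorem erase_up {M N : Tm} (h : Up M N) : Sqsub (erase M) (erase N) := by
  cases h with
  | tvar => exact sqsub_refl _
  | lam =>
      simp only [erase_upcast, erase_lam', erase_replaceUp]
      exact .lam (sqsub_refl _)
  | inj hR => exact .inj (sqsub_refl _)
  | @record es R Ns hk hent =>
      simp only [erase_upcast, erase_record']
      refine Sqsub.record ?_ ?_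
      · intro ℓ N hN
        rw [lookup_eraseLs] at hN
        obtain ⟨P, hP, rfl⟩ := Option.map_eq_some_iff.mp hN
        obtain ⟨i, hi⟩ := List.getElem?_of_mem (lookup_mem' hP)
        have hRi : (R.map Prod.fst)[i]? = some ℓ := by
          rw [← hk, List.getElem?_map, hi]; rfl
        rw [List.getElem?_map] at hRi
        obtain ⟨q, hq, hq1⟩ := Option.map_eq_some_iff.mp hRi
        obtain ⟨M', hM', _⟩ := hent i q (ℓ, P) hq hi
        rw [hq1] at hM'
        rw [lookup_eraseLs, hM']; rfl
      · intro ℓ M₀ N₀ hM₀ hN₀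
        rw [lookup_eraseLs] at hM₀ hN₀
        obtain ⟨M', hM', rfl⟩ := Option.map_eq_some_iff.mp hM₀
        obtain ⟨P, hP, rfl⟩ := Option.map_eq_some_iff.mp hN₀
        obtain ⟨i, hi⟩ := List.getElem?_of_mem (lookup_mem' hP)
        have hRi : (R.map Prod.fst)[i]? = some ℓ := by
          rw [← hk, List.getElem?_map, hi]; rfl
        rw [List.getElem?_map] at hRi
        obtain ⟨q, hq, hq1⟩ := Option.map_eq_some_iff.mp hRi
        obtain ⟨M'', hM'', hPe⟩ := hent i q (ℓ, P) hq hi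
        rw [hq1] at hM''
        have hMM : M'' = M' := by rw [hM''] at hM'; exact Option.some.inj hM'
        have hPe' : P = Tm.upcast M'' q.2 := hPe
        rw [hPe', erase_upcast, hMM]
        exact sqsub_refl _

theorem erase_compat {M N : Tm} (h : Compat Up M N) : Sqsub (erase M) (erase N) := by
  induction h with
  | base h => exact erase_up h
  | lam _ ih => exact .lam ih
  | appL _ ih => exact .app ih (sqsub_refl _)
  | appR _ ih => exact .app (sqsub_refl _) ih
  | inj _ ih => exact .inj ih
  | proj _ ih => exact .proj ih
  | upcast _ ih => exact ih
  | @caseScrut M M' Bs _ ih =>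
      exact .case ih rfl (fun i p q hp hq => by
        rw [hp] at hq; cases hq; exact sqsub_refl p.2)
  | @caseBranch M Bs₁ Bs₂ ℓ N N' _ ih =>
      simp only [erase_case', eraseLs_append, eraseLs_cons]
      have h := one_change (eraseLs Bs₁) (eraseLs Bs₂) ℓ (erase N) (erase N') ih
      exact .case (sqsub_refl _) h.1 h.2
  | @recordField es₁ es₂ ℓ M M' _ ih =>
      simp only [erase_record', eraseLs_append, eraseLs_cons]
      have h := one_change (eraseLs es₁) (eraseLs es₂) ℓ (erase M) (erase M') ih
      have h2 := record_of_pointwise h.1 h.2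
      exact .record h2.1 h2.2

end Aux


/-!
STATEMENT 13: Upcasts shrink terms under erasure: if M ▷ A reduces in one
step (compatible closure of the upcast rules) to N, then ⌊M⌋ ⊑ ⌊N⌋.
(Note ⌊M ▷ A⌋ = ⌊M⌋.)
-/
theorem upcasts_shrink_terms {M N : Tm} {A : Ty}
    (h : Compat Up (.upcast M A) N) : Sqsub (erase M) (erase N) := by
  have : erase (Tm.upcast M A) = erase M := rfl
  rw [← this]
  exact erase_compat h

end Stmt13
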